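/- arXiv:2406.01200 — 3 statements merged into one kernel-verified Lean document; each statement's English description precedes it below -/
import Mathlib

section
/- For every integer $k \ge 0$ there exists $\rho > 0$ such that for all real $t$ with $|t| < \rho$, the random variable $(1-t)^{-Y}$ is integrable and $\frac{1}{k!}\big(E[(1-t)^{-Y}] - 1\big)^k = \sum_{n=0}^{\infty} L_Y(n,k) \frac{t^n}{n!}$, the series on the right converging absolutely. -/
open MeasureTheory ProbabilityTheory Finset

/-- The rising factorial `⟨x⟩_n = x (x+1) ⋯ (x+n-1)`, with `⟨x⟩_0 = 1`. -/
noncomputable def asc (x : ℝ) : ℕ → ℝ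
  | 0 => 1
  | n + 1 => asc x n * (x + n)

/-- The probabilistic Lah numbers associated with the random variable `Y`, defined from
the iid copies `Ys` of `Y` via `L_Y(n,k) = (1/k!) ∑_{l=0}^k C(k,l) (-1)^{k-l} E[⟨S_l⟩_n]`,
where `S_l = Y_1 + ⋯ + Y_l`. -/
noncomputable def probLah {Ω : Type*} [MeasurableSpace Ω] (μ : Measure Ω)
    (Ys : ℕ → Ω → ℝ) (n k : ℕ) : ℝ :=
  (k.factorial : ℝ)⁻¹ * ∑ l ∈ Finset.range (k + 1),
    (k.choose l : ℝ) * (-1) ^ (k - l) * ∫ ω, asc (∑ j ∈ Finset.range l, Ys j ω) n ∂μ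

/-- The probabilistic Lah-Bell polynomials `B_n^{(L,Y)}(x) = ∑_{k=0}^n L_Y(n,k) x^k`. -/
noncomputable def probLahBell {Ω : Type*} [MeasurableSpace Ω] (μ : Measure Ω)
    (Ys : ℕ → Ω → ℝ) (n : ℕ) (x : ℝ) : ℝ :=
  ∑ k ∈ Finset.range (n + 1), probLah μ Ys n k * x ^ k


section AscHelpers
open Filter

lemma asc_nonneg {x : ℝ} (hx : 0 ≤ x) (n : ℕ) : 0 ≤ asc x n := by
  induction n with
  | zero => norm_num [asc]
  | succ n ih => exact mul_nonneg ih (by positivity)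

lemma asc_pos {x : ℝ} (hx : 0 < x) (n : ℕ) : 0 < asc x n := by
  induction n with
  | zero => norm_num [asc]
  | succ n ih => exact mul_pos ih (by positivity)

lemma asc_le_asc {x y : ℝ} (hx : 0 ≤ x) (hxy : x ≤ y) (n : ℕ) : asc x n ≤ asc y n := by
  induction n with
  | zero => norm_num [asc]
  | succ n ih =>
      simp only [asc]
      exact mul_le_mul ih (by linarith) (by positivity) (asc_nonneg (by linarith) n)

lemma abs_asc_le (x : ℝ) (n : ℕ) : |asc x n| ≤ asc |x| n := by
  induction n with
  | zero => norm_num [asc]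
  | succ n ih =>
      simp only [asc, abs_mul]
      refine mul_le_mul ih ((abs_add_le _ _).trans ?_) (abs_nonneg _) (asc_nonneg (abs_nonneg x) n)
      simp

lemma tendsto_ratio_aux (c q : ℝ) :
    Tendsto (fun n : ℕ => (c + n) * q / (n + 1)) atTop (nhds q) := by
  have h0 : Tendsto (fun n : ℕ => q + q * (c - 1) * (1 / ((n : ℝ) + 1))) atTop (nhds q) := by
    have := (tendsto_one_div_add_atTop_nhds_zero_nat).const_mul (q * (c - 1))
    simpa using (tendsto_const_nhds (x := q)).add this
  refine h0.congr fun n => ?_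
  have hn : ((n : ℝ) + 1) ≠ 0 := by positivity
  field_simp
  ring

lemma summable_asc_aux {c q : ℝ} (hc : 0 < c) (hq0 : 0 < q) (hq : q < 1) :
    Summable (fun n => asc c n * q ^ n / n.factorial) := by
  refine summable_of_ratio_test_tendsto_lt_one hq (Eventually.of_forall fun n => ?_) ?_
  · have := asc_pos hc n
    positivity
  · refine (tendsto_ratio_aux c q).congr fun n => ?_
    have h1 : (0:ℝ) < asc c n := asc_pos hc n
    have h1' : (0:ℝ) < asc c (n+1) := asc_pos hc (n+1)
    have h2 : (0:ℝ) < q ^ n := by positivity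
    have h3 : (0:ℝ) < (n.factorial : ℝ) := by positivity
    rw [Real.norm_of_nonneg (by positivity), Real.norm_of_nonneg (by positivity)]
    simp only [asc, pow_succ, Nat.factorial_succ, Nat.cast_mul, Nat.cast_add, Nat.cast_one]
    field_simp

lemma summable_asc_aux2 {c q : ℝ} (hc : 0 < c) (hq0 : 0 < q) (hq : q < 1) :
    Summable (fun n : ℕ => (n : ℝ) * asc c n * q ^ n / n.factorial) := by
  refine summable_of_ratio_test_tendsto_lt_one hq ?_ ?_
  · filter_upwards [eventually_ge_atTop 1] with n hn
    have := asc_pos hc n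
    have hn0 : (0:ℝ) < (n:ℝ) := by exact_mod_cast hn
    positivity
  · have key : Tendsto (fun n : ℕ => (c + (n+1:ℕ)) * q / ((n+1:ℕ))) atTop (nhds q) := by
      have := tendsto_ratio_aux (c + 1) q
      refine this.congr fun n => ?_
      push_cast; ring_nf
    have key2 : Tendsto (fun n : ℕ => (c + n) * q / n) atTop (nhds q) := by
      rw [← tendsto_add_atTop_iff_nat 1]
      exact key
    refine Tendsto.congr' ?_ key2
    filter_upwards [eventually_ge_atTop 1] with n hn
    have h1 : (0:ℝ) < asc c n := asc_pos hc n
    have h2 : (0:ℝ) < q ^ n := by positivity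
    have h3 : (0:ℝ) < (n.factorial : ℝ) := by positivity
    have hn0 : (0:ℝ) < (n:ℝ) := by exact_mod_cast hn
    have h1' : (0:ℝ) < asc c (n+1) := asc_pos hc (n+1)
    rw [Real.norm_of_nonneg (by positivity), Real.norm_of_nonneg (by positivity)]
    simp only [asc, pow_succ, Nat.factorial_succ, Nat.cast_mul, Nat.cast_add, Nat.cast_one]
    field_simp

lemma hasSum_asc (x : ℝ) {t : ℝ} (ht : |t| < 1) :
    HasSum (fun n => asc x n * t ^ n / n.factorial)
      (Real.exp (-Real.log (1 - t) * x)) := by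
  set c : ℝ := |x| + 1 with hc
  have hc0 : 0 < c := by positivity
  set ρ : ℝ := (|t| + 1) / 2 with hρ
  have htρ : |t| < ρ := by rw [hρ]; linarith
  have hρ1 : ρ < 1 := by rw [hρ]; linarith [abs_nonneg t]
  have hρ0 : 0 < ρ := by positivity
  set g : ℕ → ℝ → ℝ := fun n y => asc x n * y ^ n / n.factorial with hg
  set g' : ℕ → ℝ → ℝ := fun n y => asc x n * ((n : ℝ) * y ^ (n - 1)) / n.factorial with hg'
  -- summability of g at any |y| ≤ ρ
  have hbound : ∀ y : ℝ, |y| ≤ ρ → ∀ n, ‖g n y‖ ≤ asc c n * ρ ^ n / n.factorial := by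
    intro y hy n
    have h1 : |asc x n| ≤ asc c n :=
      (abs_asc_le x n).trans (asc_le_asc (abs_nonneg x) (by rw [hc]; linarith) n)
    have h2 : |y| ^ n ≤ ρ ^ n := pow_le_pow_left₀ (abs_nonneg y) hy n
    have h3 : (0:ℝ) < n.factorial := by positivity
    rw [hg]
    simp only [Real.norm_eq_abs, abs_div, abs_mul, abs_pow, Nat.abs_cast]
    gcongr <;> first
      | exact asc_nonneg hc0.le n | exact h1 | exact abs_nonneg y | exact hy | positivity
  have hsumg : ∀ y : ℝ, |y| ≤ ρ → Summable (fun n => g n y) := fun y hy =>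
    (summable_asc_aux hc0 hρ0 hρ1).of_norm_bounded (hbound y hy)
  -- derivative of the sum
  set G : ℝ → ℝ := fun y => ∑' n, g n y with hG
  set u : ℕ → ℝ := fun n => asc c n * ((n : ℝ) * ρ ^ (n - 1)) / n.factorial with hu
  have husum : Summable u := by
    have := (summable_asc_aux2 hc0 hρ0 hρ1).mul_left ρ⁻¹
    refine this.congr fun n => ?_
    simp only [hu]
    cases n with
    | zero => simp
    | succ m =>
        simp only [Nat.add_sub_cancel, pow_succ]
        field_simp
  have hderivg : ∀ n : ℕ, ∀ y : ℝ, HasDerivAt (g n) (g' n y) y := by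
    intro n y
    have := (hasDerivAt_pow n y).const_mul (asc x n)
    exact this.div_const _
  have hball : IsOpen (Metric.ball (0:ℝ) ρ) := Metric.isOpen_ball
  have hDG : ∀ y ∈ Metric.ball (0:ℝ) ρ, HasDerivAt G (∑' n, g' n y) y := by
    intro y hy
    refine hasDerivAt_tsum_of_isPreconnected husum hball
      ((convex_ball (0:ℝ) ρ).isPreconnected) (fun n y _ => hderivg n y)
      (fun n y hy => ?_) (Metric.mem_ball_self hρ0) ?_ hy
    · have hyρ : |y| ≤ ρ := by
        rw [Metric.mem_ball, Real.dist_eq, sub_zero] at hy; exact hy.le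
      have h1 : |asc x n| ≤ asc c n :=
        (abs_asc_le x n).trans (asc_le_asc (abs_nonneg x) (by rw [hc]; linarith) n)
      have h2 : |y| ^ (n-1) ≤ ρ ^ (n-1) := pow_le_pow_left₀ (abs_nonneg y) hyρ _
      have h3 : (0:ℝ) < n.factorial := by positivity
      rw [hg', hu]
      simp only [Real.norm_eq_abs, abs_div, abs_mul, abs_pow, Nat.abs_cast]
      gcongr <;> first
        | exact asc_nonneg hc0.le n | exact h1 | exact abs_nonneg y | exact hyρ | positivity
    · exact hsumg 0 (by simpa using hρ0.le)
  -- the ODE : (1 - y) * D y = x * G y on the ball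
  have hODE : ∀ y ∈ Metric.ball (0:ℝ) ρ, (1 - y) * (∑' n, g' n y) = x * G y := by
    intro y hy
    have hyρ : |y| ≤ ρ := by
      rw [Metric.mem_ball, Real.dist_eq, sub_zero] at hy; exact hy.le
    have hsum' : Summable (fun n => g' n y) := by
      refine husum.of_norm_bounded (fun n => ?_)
      have h1 : |asc x n| ≤ asc c n :=
        (abs_asc_le x n).trans (asc_le_asc (abs_nonneg x) (by rw [hc]; linarith) n)
      have h2 : |y| ^ (n-1) ≤ ρ ^ (n-1) := pow_le_pow_left₀ (abs_nonneg y) hyρ _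
      have h3 : (0:ℝ) < n.factorial := by positivity
      rw [hg', hu]
      simp only [Real.norm_eq_abs, abs_div, abs_mul, abs_pow, Nat.abs_cast]
      gcongr <;> first
        | exact asc_nonneg hc0.le n | exact h1 | exact abs_nonneg y | exact hyρ | positivity
    set D := ∑' n, g' n y with hD
    have hDhas : HasSum (fun n => g' n y) D := hsum'.hasSum
    have hzero : g' 0 y = 0 := by simp [hg', asc]
    have hshift : HasSum (fun n => g' (n + 1) y) D := by
      refine (hasSum_nat_add_iff (f := fun n => g' n y) 1).mpr ?_
      simpa [hzero] using hDhas
    have heq1 : (fun n : ℕ => g' (n + 1) y) = fun n : ℕ => (x + n) * g n y := by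
      funext n
      have hfac : ((n+1).factorial : ℝ) = (n+1) * n.factorial := by
        rw [Nat.factorial_succ]; push_cast; ring
      have hn1 : ((n:ℝ) + 1) ≠ 0 := by positivity
      have hfn : ((n.factorial : ℝ)) ≠ 0 := by positivity
      simp only [hg', hg, asc, Nat.add_sub_cancel, hfac]
      push_cast
      field_simp
    rw [heq1] at hshift
    have hmul : HasSum (fun n : ℕ => (n : ℝ) * g n y) (y * D) := by
      have h := hDhas.mul_left y
      have heq : (fun i : ℕ => y * g' i y) = fun n : ℕ => (n : ℝ) * g n y := by
        funext n
        cases n with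
        | zero => simp [hg, hg', asc]
        | succ m =>
            simp only [hg', hg, Nat.add_sub_cancel]
            rw [pow_succ]
            push_cast
            ring
      rwa [heq] at h
    have hxG : HasSum (fun n : ℕ => x * g n y) (x * G y) :=
      ((hsumg y hyρ).hasSum).mul_left x
    have hsub : HasSum (fun n : ℕ => x * g n y) (D - y * D) := by
      have h := hshift.sub hmul
      have heq : (fun n : ℕ => (x + n) * g n y - (n:ℝ) * g n y)
          = fun n : ℕ => x * g n y := funext fun n => by ring
      rwa [heq] at h
    have := hxG.unique hsub
    rw [this]; ring
  -- constancy of G y * exp (x * log (1 - y))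
  set E : ℝ → ℝ := fun y => Real.exp (x * Real.log (1 - y)) with hE
  have hH : ∀ y ∈ Metric.ball (0:ℝ) ρ,
      HasDerivAt (fun z => G z * E z) 0 y := by
    intro y hy
    have hyρ : |y| < ρ := by
      rwa [Metric.mem_ball, Real.dist_eq, sub_zero] at hy
    have h1y : (0:ℝ) < 1 - y := by
      have := abs_lt.mp (hyρ.trans hρ1); linarith [this.2]
    have hlog : HasDerivAt (fun z : ℝ => Real.log (1 - z)) (-1 / (1 - y)) y := by
      have hsub : HasDerivAt (fun z : ℝ => 1 - z) (-1) y := by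
        simpa using (hasDerivAt_id y).const_sub 1
      exact hsub.log h1y.ne'
    have hEd : HasDerivAt E (E y * (x * (-1 / (1 - y)))) y :=
      (hlog.const_mul x).exp
    have hGd := hDG y hy
    have := hGd.mul hEd
    have hval : (∑' n, g' n y) * E y + G y * (E y * (x * (-1 / (1 - y)))) = 0 := by
      have hODEy := hODE y hy
      have hEpos : 0 < E y := Real.exp_pos _
      field_simp
      linear_combination E y * hODEy
    rw [hval] at this
    exact this
  -- now compare at t and 0
  set a : ℝ := min t 0 with ha
  set b : ℝ := max t 0 with hb2
  have hsub : Set.Icc a b ⊆ Metric.ball (0:ℝ) ρ := by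
    intro y hy
    rw [Set.mem_Icc] at hy
    rw [Metric.mem_ball, Real.dist_eq, sub_zero, abs_lt]
    have h1 : -|t| ≤ a := le_min (neg_abs_le t) (neg_nonpos.mpr (abs_nonneg t))
    have h2 : b ≤ |t| := max_le (le_abs_self t) (abs_nonneg t)
    constructor <;> [linarith [hy.1]; linarith [hy.2]]
  have hconst : ∀ y ∈ Set.Icc a b, G y * E y = G a * E a := by
    refine constant_of_has_deriv_right_zero (fun y hy => ?_) (fun y hy => ?_)
    · exact ((hH y (hsub hy)).continuousAt).continuousWithinAt
    · exact ((hH y (hsub (Set.mem_Icc.mpr ⟨hy.1, hy.2.le⟩))).hasDerivWithinAt)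
  have hta : G t * E t = G 0 * E 0 := by
    have h1 : t ∈ Set.Icc a b := ⟨min_le_left _ _, le_max_left _ _⟩
    have h2 : (0:ℝ) ∈ Set.Icc a b := ⟨min_le_right _ _, le_max_right _ _⟩
    rw [hconst t h1, hconst 0 h2]
  have hG0 : G 0 = 1 := by
    have h0 : G 0 = ∑' n, g n 0 := rfl
    rw [h0, tsum_eq_single 0 (fun n hn => by simp [hg, zero_pow hn])]
    simp [hg, asc]
  have hE0 : E 0 = 1 := by simp [hE]
  have hGt : G t = Real.exp (-Real.log (1 - t) * x) := by
    have h1t : (0:ℝ) < 1 - t := by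
      have := abs_lt.mp ht; linarith [this.2]
    have hEt : E t = Real.exp (x * Real.log (1 - t)) := rfl
    have h : G t * E t = 1 := by rw [hta, hG0, hE0]; ring
    have hEne : E t ≠ 0 := by rw [hEt]; exact (Real.exp_pos _).ne'
    have : G t = (E t)⁻¹ := by field_simp at h ⊢; linarith [h]
    rw [this, hEt, ← Real.exp_neg]
    ring_nf
  have := (hsumg t htρ.le).hasSum
  rw [show (∑' n, g n t) = G t from rfl, hGt] at this
  exact this


end AscHelpers

theorem statement_0 {Ω : Type*} [MeasurableSpace Ω] (μ : Measure Ω) [IsProbabilityMeasure μ]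
    (Y : Ω → ℝ) (Ys : ℕ → Ω → ℝ)
    (hY : Measurable Y) (hYs : ∀ j, Measurable (Ys j))
    (hid : ∀ j, IdentDistrib (Ys j) Y μ μ)
    (hindep : iIndepFun Ys μ)
    (r : ℝ) (hr : 0 < r)
    (hmgf : ∀ t : ℝ, |t| < r → Integrable (fun ω => Real.exp (t * Y ω)) μ)
    (k : ℕ) :
    ∃ ρ > 0, ∀ t : ℝ, |t| < ρ →
      Integrable (fun ω => Real.rpow (1 - t) (-(Y ω))) μ ∧
      Summable (fun n : ℕ => |probLah μ Ys n k * t ^ n / n.factorial|) ∧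
      (k.factorial : ℝ)⁻¹ * ((∫ ω, Real.rpow (1 - t) (-(Y ω)) ∂μ) - 1) ^ k
        = ∑' n : ℕ, probLah μ Ys n k * t ^ n / n.factorial := by
  classical
  set sm : ℝ := min r 1 / 2 with hsm
  have hsm0 : 0 < sm := by rw [hsm]; positivity
  have hsmr : sm < r := by
    rw [hsm]
    rcases min_cases r 1 with ⟨h1, h2⟩ | ⟨h1, h2⟩ <;> rw [h1] <;> linarith
  set ρ : ℝ := 1 - Real.exp (-sm) with hρdef
  have hρ0 : 0 < ρ := by
    rw [hρdef]
    have : Real.exp (-sm) < 1 := Real.exp_lt_one_iff.mpr (by linarith)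
    linarith
  have hρ1 : ρ < 1 := by
    rw [hρdef]
    have := Real.exp_pos (-sm)
    linarith
  refine ⟨ρ, hρ0, fun t ht => ?_⟩
  have ht1 : |t| < 1 := ht.trans hρ1
  have h1t : (0:ℝ) < 1 - t := by
    have := (abs_lt.mp ht1).2; linarith
  have h1ta : (0:ℝ) < 1 - |t| := by linarith [(abs_lt.mp ht1).2, abs_nonneg t]
  set s : ℝ := -Real.log (1 - t) with hsdef
  -- |s| ≤ -log(1 - |t|) < sm
  have hlogρ : -Real.log (1 - ρ) = sm := by
    rw [hρdef]; simp [Real.log_exp]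
  have hs'sm : -Real.log (1 - |t|) < sm := by
    rw [← hlogρ]
    have h2 : 1 - ρ < 1 - |t| := by linarith
    have h3 : (0:ℝ) < 1 - ρ := by
      rw [hρdef]; have := Real.exp_pos (-sm); linarith
    have := Real.log_lt_log h3 h2
    linarith
  have habs_s : |s| < sm := by
    rw [hsdef, abs_lt]
    constructor
    · -- -sm < -log(1-t), i.e. log(1-t) < sm
      have h2 : Real.log (1 - t) ≤ Real.log (1 - t) := le_refl _
      have hup : Real.log (1 - t) < sm := by
        have h3 : (1:ℝ) - t ≤ 1 + |t| := by cases abs_cases t <;> linarith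
        have h4 : Real.log (1 - t) ≤ Real.log (1 + |t|) := Real.log_le_log h1t h3
        have h5 : (1 + |t|) * (1 - |t|) ≤ 1 := by nlinarith [abs_nonneg t]
        have h6 : Real.log (1 + |t|) + Real.log (1 - |t|) ≤ 0 := by
          rw [← Real.log_mul (by positivity) (by positivity)]
          exact Real.log_nonpos (by positivity) h5
        linarith
      linarith
    · have h3 : (1:ℝ) - |t| ≤ 1 - t := by cases abs_cases t <;> linarith
      have h4 : Real.log (1 - |t|) ≤ Real.log (1 - t) := Real.log_le_log h1ta h3
      linarith
  have hsr : |s| < r := habs_s.trans hsmr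
  -- rewrite rpow as exp
  have hrpow : (fun ω => Real.rpow (1 - t) (-(Y ω))) = fun ω => Real.exp (s * Y ω) := by
    funext ω
    show (1 - t) ^ (-(Y ω)) = Real.exp (s * Y ω)
    rw [Real.rpow_def_of_pos h1t]
    congr 1
    rw [hsdef]; ring
  have hint_t : Integrable (fun ω => Real.rpow (1 - t) (-(Y ω))) μ := by
    rw [hrpow]; exact hmgf s hsr
  refine ⟨hint_t, ?_⟩
  -- partial sums S l
  set S : ℕ → Ω → ℝ := fun l ω => ∑ j ∈ Finset.range l, Ys j ω with hSdef
  have hSmeas : ∀ l, Measurable (S l) := fun l => Finset.measurable_sum _ fun j _ => hYs j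
  -- integrability of exp(a * S l) for |a| < r
  have hintS : ∀ (a : ℝ), |a| < r → ∀ l, Integrable (fun ω => Real.exp (a * S l ω)) μ := by
    intro a ha l
    have h1 : ∀ j, Integrable (fun ω => Real.exp (a * Ys j ω)) μ := by
      intro j
      have hcomp : IdentDistrib (fun ω => Real.exp (a * Ys j ω))
          (fun ω => Real.exp (a * Y ω)) μ μ :=
        (hid j).comp ((measurable_id.const_mul a).exp)
      exact hcomp.integrable_iff.mpr (hmgf a ha)
    have := hindep.integrable_exp_mul_sum hYs (s := Finset.range l) (fun j _ => h1 j)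
    refine this.congr ?_
    filter_upwards with ω
    simp [hSdef, Finset.sum_apply]
  -- integrable exp(sm * |S l|)
  have hintabs : ∀ l, Integrable (fun ω => Real.exp (sm * |S l ω|)) μ := by
    intro l
    have h1 := hintS sm (by rwa [abs_of_pos hsm0]) l
    have h2 := hintS (-sm) (by rwa [abs_neg, abs_of_pos hsm0]) l
    refine ((h1.add h2).mono' ?_ ?_)
    · exact (((hSmeas l).abs.const_mul sm).exp).aestronglyMeasurable
    · filter_upwards with ω
      rw [Real.norm_eq_abs, abs_of_pos (Real.exp_pos _)]
      rcases abs_cases (S l ω) with ⟨he, _⟩ | ⟨he, _⟩ <;> rw [he] <;>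
        simp only [Pi.add_apply, mul_neg, neg_mul] <;>
        [linarith [Real.exp_pos (-(sm * S l ω)), le_refl (Real.exp (sm * S l ω))];
         linarith [Real.exp_pos (sm * S l ω)]]
  -- key domination: asc |x| n ≤ n!/ρ^n * exp(sm |x|)
  have hdom : ∀ (x : ℝ) (n : ℕ),
      asc |x| n ≤ (n.factorial : ℝ) / ρ ^ n * Real.exp (sm * |x|) := by
    intro x n
    have hH := hasSum_asc |x| (t := ρ) (by rwa [abs_of_pos hρ0])
    rw [hlogρ] at hH
    have hterm : asc |x| n * ρ ^ n / n.factorial ≤ Real.exp (sm * |x|) :=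
      le_hasSum hH n fun j _ => by
        have := asc_nonneg (abs_nonneg x) j
        positivity
    have hpow : (0:ℝ) < ρ ^ n := by positivity
    have hfac : (0:ℝ) < (n.factorial : ℝ) := by positivity
    rw [div_le_iff₀ hfac] at hterm
    rw [div_mul_eq_mul_div, le_div_iff₀ hpow]
    nlinarith [hterm]
  set M : ℝ := ∫ ω, Real.exp (s * Y ω) ∂μ with hMdef
  set q : ℝ := |t| / ρ with hqdef
  have hq0 : 0 ≤ q := by rw [hqdef]; positivity
  have hq1 : q < 1 := by
    rw [hqdef, div_lt_one hρ0]; exact ht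
  -- the family F l n
  set F : ℕ → ℕ → Ω → ℝ := fun l n ω => asc (S l ω) n * (t ^ n / n.factorial) with hFdef
  have hFmeas : ∀ l n, Measurable (fun ω => F l n ω) := by
    intro l n
    apply Measurable.mul_const
    induction n with
    | zero => simpa [asc] using measurable_const
    | succ m ih => exact Measurable.mul ih (by measurability)
  have hFbound : ∀ l n ω, ‖F l n ω‖ ≤ q ^ n * Real.exp (sm * |S l ω|) := by
    intro l n ω
    have h1 : |asc (S l ω) n| ≤ asc |S l ω| n := abs_asc_le _ n
    have h2 := hdom (S l ω) n
    have hfac : (0:ℝ) < (n.factorial : ℝ) := by positivity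
    have hpow : (0:ℝ) < ρ ^ n := by positivity
    rw [hFdef]
    simp only [Real.norm_eq_abs, abs_mul, abs_div, abs_pow, Nat.abs_cast]
    have h3 : |asc (S l ω) n| * (|t| ^ n / n.factorial)
        ≤ ((n.factorial : ℝ) / ρ ^ n * Real.exp (sm * |S l ω|)) * (|t| ^ n / n.factorial) := by
      gcongr
      exact h1.trans h2
    refine h3.trans (le_of_eq ?_)
    rw [hqdef, div_pow]
    field_simp
  have hFint : ∀ l n, Integrable (F l n) μ := by
    intro l n
    refine ((hintabs l).const_mul (q ^ n)).mono' ((hFmeas l n).aestronglyMeasurable) ?_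
    filter_upwards with ω
    exact hFbound l n ω
  have hCpos : ∀ l, 0 ≤ ∫ ω, Real.exp (sm * |S l ω|) ∂μ := fun l =>
    integral_nonneg fun ω => (Real.exp_pos _).le
  have hFnorm : ∀ l n, (∫ ω, ‖F l n ω‖ ∂μ) ≤ q ^ n * ∫ ω, Real.exp (sm * |S l ω|) ∂μ := by
    intro l n
    have := integral_mono ((hFint l n).norm) ((hintabs l).const_mul (q ^ n))
      (fun ω => hFbound l n ω)
    rwa [integral_const_mul] at this
  have hFnormsum : ∀ l, Summable (fun n => ∫ ω, ‖F l n ω‖ ∂μ) := by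
    intro l
    refine Summable.of_nonneg_of_le (fun n => integral_nonneg fun ω => norm_nonneg _)
      (fun n => hFnorm l n) ?_
    exact (summable_geometric_of_lt_one hq0 hq1).mul_right _
  -- HasSum for each l
  have hHSl : ∀ l, HasSum (fun n => ∫ ω, F l n ω ∂μ) (M ^ l) := by
    intro l
    have hkey := hasSum_integral_of_summable_integral_norm (μ := μ)
      (F := F l) (hFint l) (hFnormsum l)
    have hpt : (fun ω => ∑' n, F l n ω) = fun ω => Real.exp (s * S l ω) := by
      funext ω
      have := (hasSum_asc (S l ω) ht1).tsum_eq
      rw [hFdef]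
      simp only [mul_div_assoc] at this ⊢
      rw [this, hsdef]
    rw [hpt] at hkey
    -- ∫ exp(s * S l) = M ^ l
    have hmgfS : (∫ ω, Real.exp (s * S l ω) ∂μ) = M ^ l := by
      have h1 : (∫ ω, Real.exp (s * S l ω) ∂μ) = mgf (∑ j ∈ Finset.range l, Ys j) μ s := by
        rw [mgf]
        congr 1
        funext ω
        simp [hSdef, Finset.sum_apply]
      rw [h1, hindep.mgf_sum hYs]
      have h2 : ∀ j, mgf (Ys j) μ s = M := by
        intro j
        have hcomp : IdentDistrib (fun ω => Real.exp (s * Ys j ω))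
            (fun ω => Real.exp (s * Y ω)) μ μ :=
          (hid j).comp ((measurable_id.const_mul s).exp)
        rw [mgf, hMdef]
        exact hcomp.integral_eq
      rw [Finset.prod_congr rfl fun j _ => h2 j, Finset.prod_const, Finset.card_range]
    rwa [hmgfS] at hkey
  -- combine over l
  set c : ℕ → ℝ := fun l => (k.choose l : ℝ) * (-1) ^ (k - l) with hcdef
  have hcomb : HasSum
      (fun n => (k.factorial : ℝ)⁻¹ * ∑ l ∈ Finset.range (k+1), c l * ∫ ω, F l n ω ∂μ)
      ((k.factorial : ℝ)⁻¹ * ∑ l ∈ Finset.range (k+1), c l * M ^ l) := by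
    exact (hasSum_sum fun l _ => (hHSl l).mul_left (c l)).mul_left _
  have hterm_eq : (fun n => (k.factorial : ℝ)⁻¹ *
        ∑ l ∈ Finset.range (k+1), c l * ∫ ω, F l n ω ∂μ)
      = fun n => probLah μ Ys n k * t ^ n / n.factorial := by
    funext n
    have hint_eq : ∀ l, (∫ ω, F l n ω ∂μ)
        = (∫ ω, asc (S l ω) n ∂μ) * (t ^ n / n.factorial) := fun l =>
      integral_mul_const _ _
    simp only [hint_eq, hcdef, probLah, hSdef]
    rw [mul_div_assoc, mul_assoc, Finset.sum_mul]
    congr 1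
    exact Finset.sum_congr rfl fun l _ => by ring
  have hval_eq : (k.factorial : ℝ)⁻¹ * ∑ l ∈ Finset.range (k+1), c l * M ^ l
      = (k.factorial : ℝ)⁻¹ * (M - 1) ^ k := by
    congr 1
    rw [show M - 1 = M + (-1) by ring, add_pow]
    refine Finset.sum_congr rfl fun l hl => ?_
    rw [hcdef]
    ring
  rw [hterm_eq, hval_eq] at hcomb
  constructor
  · -- summability of absolute values
    have hb : ∀ n, |probLah μ Ys n k * t ^ n / n.factorial|
        ≤ ∑ l ∈ Finset.range (k+1), (k.choose l : ℝ) * ∫ ω, ‖F l n ω‖ ∂μ := by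
      intro n
      have h1 : probLah μ Ys n k * t ^ n / n.factorial
          = (k.factorial : ℝ)⁻¹ * ∑ l ∈ Finset.range (k+1), c l * ∫ ω, F l n ω ∂μ :=
        (congrFun hterm_eq n).symm
      rw [h1, abs_mul]
      have hfle : |(k.factorial : ℝ)⁻¹| ≤ 1 := by
        rw [abs_of_nonneg (by positivity)]
        exact inv_le_one_of_one_le₀ (by exact_mod_cast k.factorial_pos)
      have h3 : |∑ l ∈ Finset.range (k+1), c l * ∫ ω, F l n ω ∂μ|
          ≤ ∑ l ∈ Finset.range (k+1), (k.choose l : ℝ) * ∫ ω, ‖F l n ω‖ ∂μ := by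
        refine (Finset.abs_sum_le_sum_abs _ _).trans ?_
        refine Finset.sum_le_sum fun l _ => ?_
        rw [abs_mul, hcdef]
        have habs : |(k.choose l : ℝ) * (-1) ^ (k - l)| = (k.choose l : ℝ) := by
          rw [abs_mul, abs_pow, abs_neg, abs_one, one_pow, mul_one, Nat.abs_cast]
        rw [habs]
        refine mul_le_mul_of_nonneg_left ?_ (Nat.cast_nonneg _)
        have := norm_integral_le_integral_norm (μ := μ) (f := F l n)
        simpa [Real.norm_eq_abs] using this
      have := mul_le_mul hfle h3 (abs_nonneg _) zero_le_one
      simpa using this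
    refine Summable.of_nonneg_of_le (fun n => abs_nonneg _) hb ?_
    exact summable_sum fun l _ => (hFnormsum l).mul_left _
  · rw [hrpow]
    exact hcomb.tsum_eq.symm
end

section
/- (Dobinski-like formula) For every integer $n \ge 0$ and every real number $x$, the series $\sum_{k=0}^{\infty}\frac{x^k}{k!}E[\langle S_k\rangle_n]$ converges absolutely and $B_n^{(L,Y)}(x) = e^{-x}\sum_{k=0}^{\infty}\frac{x^k}{k!}E\big[\langle S_k\rangle_n\big]$. -/
open MeasureTheory ProbabilityTheory Finset

lemma asc_eq_eval (n : ℕ) (x : ℝ) :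
    (∏ i ∈ Finset.range n, (Polynomial.X + Polynomial.C (i : ℝ))).eval x = asc x n := by
  induction n with
  | zero => simp [asc]
  | succ n ih => rw [Finset.prod_range_succ, Polynomial.eval_mul, ih]; simp [asc]

lemma asc_poly (n : ℕ) : ∃ q : ℕ → ℝ,
    ∀ x : ℝ, asc x n = ∑ m ∈ Finset.range (n + 1), q m * x ^ m := by
  classical
  refine ⟨fun m => (∏ i ∈ Finset.range n, (Polynomial.X + Polynomial.C (i : ℝ))).coeff m,
    fun x => ?_⟩
  have hdeg : (∏ i ∈ Finset.range n, (Polynomial.X + Polynomial.C (i : ℝ))).natDegree < n + 1 := by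
    have h1 : ∀ i ∈ Finset.range n, (Polynomial.X + Polynomial.C (i : ℝ)).natDegree ≤ 1 :=
      fun i _ => le_of_eq (Polynomial.natDegree_X_add_C _)
    have h2 := Finset.sum_le_sum h1
    simp only [Finset.sum_const, Finset.card_range, smul_eq_mul, mul_one] at h2
    exact Nat.lt_succ_of_le (le_trans (Polynomial.natDegree_prod_le _ _) h2)
  rw [← asc_eq_eval n x, Polynomial.eval_eq_sum_range' hdeg]

lemma choose_le_two_pow_real (k j : ℕ) : (k.choose j : ℝ) ≤ 2 ^ k := by
  have h : k.choose j ≤ 2 ^ k := by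
    rcases le_or_gt j k with h | h
    · calc k.choose j ≤ ∑ i ∈ Finset.range (k + 1), k.choose i :=
          Finset.single_le_sum (fun i _ => Nat.zero_le _)
            (Finset.mem_range.2 (Nat.lt_succ_of_le h))
        _ = 2 ^ k := Nat.sum_range_choose k
    · simp [Nat.choose_eq_zero_of_lt h]
  exact_mod_cast h

lemma fwdDiff_iter_zero_fun (k : ℕ) : (fwdDiff (1 : ℕ))^[k] (0 : ℕ → ℝ) = 0 := by
  induction k with
  | zero => rfl
  | succ k ih =>
    rw [Function.iterate_succ_apply, show fwdDiff (1 : ℕ) (0 : ℕ → ℝ) = 0 by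
      funext m; simp [fwdDiff], ih]

lemma fwdDiff_iter_eq_zero_of_le {f : ℕ → ℝ} {d k : ℕ}
    (h : (fwdDiff (1 : ℕ))^[d] f = 0) (hdk : d ≤ k) : (fwdDiff (1 : ℕ))^[k] f = 0 := by
  obtain ⟨e, rfl⟩ := Nat.exists_eq_add_of_le hdk
  rw [add_comm, Function.iterate_add_apply, h, fwdDiff_iter_zero_fun]

lemma pow_div_factorial_le_exp (m : ℕ) {x : ℝ} (hx : 0 ≤ x) :
    x ^ m / m.factorial ≤ Real.exp x := by
  calc x ^ m / m.factorial ≤ ∑ i ∈ Finset.range (m + 1), x ^ i / i.factorial :=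
      Finset.single_le_sum (f := fun i => x ^ i / i.factorial)
        (fun i _ => by positivity) (Finset.mem_range.2 (Nat.lt_succ_self m))
    _ ≤ Real.exp x := Real.sum_le_exp_of_nonneg hx _

theorem statement_3 {Ω : Type*} [MeasurableSpace Ω] (μ : Measure Ω) [IsProbabilityMeasure μ]
    (Y : Ω → ℝ) (Ys : ℕ → Ω → ℝ)
    (hY : Measurable Y) (hYs : ∀ j, Measurable (Ys j))
    (hid : ∀ j, IdentDistrib (Ys j) Y μ μ)
    (hindep : iIndepFun Ys μ)
    (r : ℝ) (hr : 0 < r)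
    (hmgf : ∀ t : ℝ, |t| < r → Integrable (fun ω => Real.exp (t * Y ω)) μ)
    (n : ℕ) (x : ℝ) :
    Summable (fun k : ℕ =>
      |x ^ k / k.factorial * ∫ ω, asc (∑ j ∈ Finset.range k, Ys j ω) n ∂μ|) ∧
    probLahBell μ Ys n x = Real.exp (-x) *
      ∑' k : ℕ, x ^ k / k.factorial * ∫ ω, asc (∑ j ∈ Finset.range k, Ys j ω) n ∂μ := by
  classical
  -- the sequence of integrals
  set a : ℕ → ℝ := fun l => ∫ ω, asc (∑ j ∈ Finset.range l, Ys j ω) n ∂μ with hadef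
  -- integrability of powers of Y
  have hYpow : ∀ m : ℕ, Integrable (fun ω => (Y ω) ^ m) μ := by
    intro m
    have ht0 : (0 : ℝ) < r / 2 := by linarith
    have h1 : Integrable (fun ω => Real.exp ((r / 2) * Y ω)) μ :=
      hmgf (r / 2) (by rw [abs_of_pos ht0]; linarith)
    have h2 : Integrable (fun ω => Real.exp (-(r / 2) * Y ω)) μ :=
      hmgf (-(r / 2)) (by rw [abs_neg, abs_of_pos ht0]; linarith)
    have hg : Integrable (fun ω => (m.factorial / (r / 2) ^ m) *
        (Real.exp ((r / 2) * Y ω) + Real.exp (-(r / 2) * Y ω))) μ := (h1.add h2).const_mul _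
    refine hg.mono' ((hY.pow_const m).aestronglyMeasurable) (ae_of_all _ fun ω => ?_)
    have habs : Real.exp ((r / 2) * |Y ω|) ≤
        Real.exp ((r / 2) * Y ω) + Real.exp (-(r / 2) * Y ω) := by
      rcases le_or_gt 0 (Y ω) with h | h
      · rw [abs_of_nonneg h]; exact le_add_of_nonneg_right (Real.exp_pos _).le
      · rw [abs_of_neg h]
        have : (r / 2) * -Y ω = -(r / 2) * Y ω := by ring
        rw [this]
        exact le_add_of_nonneg_left (Real.exp_pos _).le
    have hkey : ((r / 2) * |Y ω|) ^ m / m.factorial ≤ Real.exp ((r / 2) * |Y ω|) :=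
      pow_div_factorial_le_exp m (by positivity)
    have hfac : (0 : ℝ) < m.factorial := by exact_mod_cast m.factorial_pos
    rw [Real.norm_eq_abs, abs_pow]
    rw [div_le_iff₀ hfac, mul_pow] at hkey
    rw [div_mul_eq_mul_div, le_div_iff₀ (pow_pos ht0 m)]
    have h3 := mul_le_mul_of_nonneg_right habs hfac.le
    nlinarith [hkey, h3]
  -- moments of Y and of the Ys
  set μm : ℕ → ℝ := fun p => ∫ ω, (Y ω) ^ p ∂μ with hμmdef
  have hYspow_id : ∀ j p, IdentDistrib (fun ω => (Ys j ω) ^ p) (fun ω => (Y ω) ^ p) μ μ :=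
    fun j p => (hid j).comp (measurable_id.pow_const p)
  have hYspow_int : ∀ j p, Integrable (fun ω => (Ys j ω) ^ p) μ :=
    fun j p => ((hYspow_id j p).integrable_iff).2 (hYpow p)
  have hYspow_eq : ∀ j p, ∫ ω, (Ys j ω) ^ p ∂μ = μm p := fun j p => (hYspow_id j p).integral_eq
  have hμm0 : μm 0 = 1 := by simp [hμmdef]
  -- measurability and independence of partial sums
  have hSm : ∀ l, Measurable (fun ω => ∑ j ∈ Finset.range l, Ys j ω) :=
    fun l => Finset.measurable_sum _ fun j _ => hYs j
  have hSindep : ∀ l, IndepFun (fun ω => ∑ j ∈ Finset.range l, Ys j ω) (Ys l) μ := by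
    intro l
    have h := hindep.indepFun_sum_range_succ hYs l
    have he : (∑ j ∈ Finset.range l, Ys j) = fun ω => ∑ j ∈ Finset.range l, Ys j ω := by
      funext ω; simp
    rwa [he] at h
  -- integrability of powers of partial sums
  have hSint : ∀ l m, Integrable (fun ω => (∑ j ∈ Finset.range l, Ys j ω) ^ m) μ := by
    intro l
    induction l with
    | zero => intro m; simpa using integrable_const ((0 : ℝ) ^ m)
    | succ l ih =>
      intro m
      have hrw : (fun ω => (∑ j ∈ Finset.range (l + 1), Ys j ω) ^ m) = fun ω =>
          ∑ jj ∈ Finset.range (m + 1), (∑ j ∈ Finset.range l, Ys j ω) ^ jj *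
            (Ys l ω) ^ (m - jj) * (m.choose jj : ℝ) := by
        funext ω; rw [Finset.sum_range_succ, add_pow]
      rw [hrw]
      refine integrable_finset_sum _ fun jj _ => ?_
      have hip : IndepFun (fun ω => (∑ j ∈ Finset.range l, Ys j ω) ^ jj)
          (fun ω => (Ys l ω) ^ (m - jj)) μ :=
        (hSindep l).comp (measurable_id.pow_const jj) (measurable_id.pow_const (m - jj))
      exact (hip.integrable_mul (ih jj) (hYspow_int l (m - jj))).mul_const _
  -- the moment sequences
  set b : ℕ → ℕ → ℝ := fun m l => ∫ ω, (∑ j ∈ Finset.range l, Ys j ω) ^ m ∂μ with hbdef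
  -- recurrence for the moments
  have hbrec : ∀ m l, b m (l + 1) =
      ∑ jj ∈ Finset.range (m + 1), ((m.choose jj : ℝ) * μm (m - jj)) * b jj l := by
    intro m l
    have hrw : (fun ω => (∑ j ∈ Finset.range (l + 1), Ys j ω) ^ m) = fun ω =>
        ∑ jj ∈ Finset.range (m + 1), (∑ j ∈ Finset.range l, Ys j ω) ^ jj *
          (Ys l ω) ^ (m - jj) * (m.choose jj : ℝ) := by
      funext ω; rw [Finset.sum_range_succ, add_pow]
    have h1 : b m (l + 1) = ∑ jj ∈ Finset.range (m + 1), ∫ ω,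
        (∑ j ∈ Finset.range l, Ys j ω) ^ jj * (Ys l ω) ^ (m - jj) * (m.choose jj : ℝ) ∂μ := by
      rw [hbdef]
      simp only
      rw [show (∫ ω, (∑ j ∈ Finset.range (l+1), Ys j ω) ^ m ∂μ) = ∫ ω,
          ∑ jj ∈ Finset.range (m + 1), (∑ j ∈ Finset.range l, Ys j ω) ^ jj *
            (Ys l ω) ^ (m - jj) * (m.choose jj : ℝ) ∂μ from congrArg _ hrw]
      refine integral_finset_sum _ fun jj _ => ?_
      have hip : IndepFun (fun ω => (∑ j ∈ Finset.range l, Ys j ω) ^ jj)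
          (fun ω => (Ys l ω) ^ (m - jj)) μ :=
        (hSindep l).comp (measurable_id.pow_const jj) (measurable_id.pow_const (m - jj))
      exact (hip.integrable_mul (hSint l jj) (hYspow_int l (m - jj))).mul_const _
    rw [h1]
    refine Finset.sum_congr rfl fun jj _ => ?_
    have hip : IndepFun (fun ω => (∑ j ∈ Finset.range l, Ys j ω) ^ jj)
        (fun ω => (Ys l ω) ^ (m - jj)) μ :=
      (hSindep l).comp (measurable_id.pow_const jj) (measurable_id.pow_const (m - jj))
    have h2 : (∫ ω, (∑ j ∈ Finset.range l, Ys j ω) ^ jj * (Ys l ω) ^ (m - jj) ∂μ)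
        = (∫ ω, (∑ j ∈ Finset.range l, Ys j ω) ^ jj ∂μ) * ∫ ω, (Ys l ω) ^ (m - jj) ∂μ :=
      hip.integral_mul_eq_mul_integral ((hSm l).pow_const jj).aestronglyMeasurable
        ((hYs l).pow_const (m - jj)).aestronglyMeasurable
    rw [integral_mul_const, h2, hYspow_eq l (m - jj), hbdef]
    ring
  -- each moment sequence is "polynomial of degree ≤ m"
  have hbpoly : ∀ m, (fwdDiff (1 : ℕ))^[m + 1] (b m) = 0 := by
    intro m
    induction m using Nat.strong_induction_on with
    | _ m ih =>
      have hdiff : fwdDiff (1 : ℕ) (b m) =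
          ∑ jj ∈ Finset.range m, ((m.choose jj : ℝ) * μm (m - jj)) • b jj := by
        funext l
        rw [Finset.sum_apply]
        simp only [fwdDiff, Pi.smul_apply, smul_eq_mul]
        rw [hbrec m l, Finset.sum_range_succ]
        simp [hμm0]
      rw [Function.iterate_succ_apply, hdiff, fwdDiff_iter_finset_sum]
      refine Finset.sum_eq_zero fun jj hjj => ?_
      rw [fwdDiff_iter_const_smul,
        fwdDiff_iter_eq_zero_of_le (ih jj (Finset.mem_range.1 hjj))
          (Nat.succ_le_of_lt (Finset.mem_range.1 hjj)), smul_zero]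
  -- expand asc into powers
  obtain ⟨q, hq⟩ := asc_poly n
  have haeq : a = ∑ m ∈ Finset.range (n + 1), q m • b m := by
    funext l
    rw [Finset.sum_apply]
    simp only [Pi.smul_apply, smul_eq_mul]
    rw [hadef]
    simp only
    rw [show (∫ ω, asc (∑ j ∈ Finset.range l, Ys j ω) n ∂μ) = ∫ ω,
        ∑ m ∈ Finset.range (n + 1), q m * (∑ j ∈ Finset.range l, Ys j ω) ^ m ∂μ from
      congrArg _ (by funext ω; rw [hq])]
    rw [integral_finset_sum _ fun m _ => (hSint l m).const_mul _]
    exact Finset.sum_congr rfl fun m _ => by rw [integral_const_mul, hbdef]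
  have hapoly : (fwdDiff (1 : ℕ))^[n + 1] a = 0 := by
    rw [haeq, fwdDiff_iter_finset_sum]
    refine Finset.sum_eq_zero fun m hm => ?_
    rw [fwdDiff_iter_const_smul,
      fwdDiff_iter_eq_zero_of_le (hbpoly m) (by
        have := Finset.mem_range.1 hm; omega), smul_zero]
  -- Newton coefficients
  set d : ℕ → ℝ := fun j => (fwdDiff (1 : ℕ))^[j] a 0 with hddef
  have hd0 : ∀ j, n + 1 ≤ j → d j = 0 := by
    intro j hj
    rw [hddef]
    simp only
    rw [fwdDiff_iter_eq_zero_of_le hapoly hj]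
    rfl
  -- alternating sum identity
  have halt : ∀ k, ∑ l ∈ Finset.range (k + 1), (k.choose l : ℝ) * (-1) ^ (k - l) * a l = d k := by
    intro k
    rw [hddef]
    simp only
    rw [fwdDiff_iter_eq_sum_shift]
    refine Finset.sum_congr rfl fun l hl => ?_
    have : (0 : ℕ) + l • 1 = l := by simp
    rw [this, zsmul_eq_mul]
    push_cast
    ring
  -- Newton's forward-difference formula
  have hnewton : ∀ k, a k = ∑ j ∈ Finset.range (k + 1), (k.choose j : ℝ) * d j := by
    intro k
    have h := shift_eq_sum_fwdDiff_iter (1 : ℕ) a k 0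
    simp only [zero_add, smul_eq_mul, mul_one] at h
    rw [h]
    exact Finset.sum_congr rfl fun j _ => by rw [hddef]; simp [nsmul_eq_mul]
  have hform : ∀ k, a k = ∑ j ∈ Finset.range (n + 1), (k.choose j : ℝ) * d j := by
    intro k
    rw [hnewton k]
    rcases le_total k n with h | h
    · exact Finset.sum_subset (Finset.range_subset_range.2 (by omega)) fun j _ hj => by
        rw [Nat.choose_eq_zero_of_lt (by
          simp only [Finset.mem_range, not_lt] at hj; omega)]
        simp
    · exact (Finset.sum_subset (Finset.range_subset_range.2 (by omega)) fun j _ hj => by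
        rw [hd0 j (by simp only [Finset.mem_range, not_lt] at hj; omega), mul_zero]).symm
  -- growth bound and summability
  set M : ℝ := ∑ j ∈ Finset.range (n + 1), |d j| with hMdef
  have habound : ∀ k, |a k| ≤ M * 2 ^ k := by
    intro k
    rw [hform k]
    calc |∑ j ∈ Finset.range (n + 1), (k.choose j : ℝ) * d j|
        ≤ ∑ j ∈ Finset.range (n + 1), |(k.choose j : ℝ) * d j| :=
          Finset.abs_sum_le_sum_abs _ _
      _ ≤ ∑ j ∈ Finset.range (n + 1), 2 ^ k * |d j| := by
          refine Finset.sum_le_sum fun j _ => ?_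
          rw [abs_mul, Nat.abs_cast]
          exact mul_le_mul_of_nonneg_right (choose_le_two_pow_real k j) (abs_nonneg _)
      _ = M * 2 ^ k := by rw [← Finset.mul_sum, hMdef, mul_comm]
  have hsummable : Summable fun k : ℕ => |x ^ k / k.factorial * a k| := by
    refine Summable.of_nonneg_of_le (fun k => abs_nonneg _) (fun k => ?_)
      ((Real.summable_pow_div_factorial (2 * |x|)).mul_left M)
    rw [abs_mul, abs_div, abs_pow, Nat.abs_cast]
    calc |x| ^ k / k.factorial * |a k| ≤ |x| ^ k / k.factorial * (M * 2 ^ k) :=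
        mul_le_mul_of_nonneg_left (habound k) (by positivity)
      _ = M * ((2 * |x|) ^ k / k.factorial) := by rw [mul_pow]; ring
  refine ⟨hsummable, ?_⟩
  -- Cauchy product
  have hf : Summable fun k : ℕ => ‖x ^ k / k.factorial * a k‖ := by
    simpa only [Real.norm_eq_abs] using hsummable
  have hg : Summable fun m : ℕ => ‖(-x) ^ m / (m.factorial : ℝ)‖ := by
    have : (fun m : ℕ => ‖(-x) ^ m / (m.factorial : ℝ)‖) = fun m => |x| ^ m / m.factorial := by
      funext m
      rw [Real.norm_eq_abs, abs_div, abs_pow, abs_neg, Nat.abs_cast]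
    rw [this]
    exact Real.summable_pow_div_factorial |x|
  have hexp : Real.exp (-x) = ∑' m : ℕ, (-x) ^ m / (m.factorial : ℝ) := by
    rw [Real.exp_eq_exp_ℝ, NormedSpace.exp_eq_tsum_div]
  have hC := tsum_mul_tsum_eq_tsum_sum_range_of_summable_norm
    (f := fun k => x ^ k / k.factorial * a k)
    (g := fun m => (-x) ^ m / (m.factorial : ℝ)) hf hg
  have hinner : ∀ k, (∑ l ∈ Finset.range (k + 1),
      (x ^ l / l.factorial * a l) * ((-x) ^ (k - l) / ((k - l).factorial : ℝ)))
      = x ^ k / k.factorial * d k := by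
    intro k
    have hterm : ∀ l ∈ Finset.range (k + 1),
        (x ^ l / l.factorial * a l) * ((-x) ^ (k - l) / ((k - l).factorial : ℝ))
        = x ^ k / k.factorial * ((k.choose l : ℝ) * (-1) ^ (k - l) * a l) := by
      intro l hl
      have hlk : l ≤ k := Nat.lt_succ_iff.1 (Finset.mem_range.1 hl)
      have hxx : x ^ l * x ^ (k - l) = x ^ k := by
        rw [← pow_add, Nat.add_sub_cancel' hlk]
      have hfac : (k.choose l : ℝ) * l.factorial * (k - l).factorial = k.factorial := by
        exact_mod_cast congrArg (Nat.cast (R := ℝ)) (Nat.choose_mul_factorial_mul_factorial hlk)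
      have hl0 : (l.factorial : ℝ) ≠ 0 := Nat.cast_ne_zero.2 l.factorial_ne_zero
      have hk0 : (k.factorial : ℝ) ≠ 0 := Nat.cast_ne_zero.2 k.factorial_ne_zero
      have hkl0 : ((k - l).factorial : ℝ) ≠ 0 := Nat.cast_ne_zero.2 (k - l).factorial_ne_zero
      have hkey2 : (k.choose l : ℝ) / k.factorial =
          1 / ((l.factorial : ℝ) * (k - l).factorial) := by
        rw [div_eq_div_iff hk0 (mul_ne_zero hl0 hkl0)]
        linear_combination hfac
      rw [neg_pow]
      calc (x ^ l / l.factorial * a l) * ((-1) ^ (k - l) * x ^ (k - l) / ((k - l).factorial : ℝ))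
          = (x ^ l * x ^ (k - l)) * ((-1) ^ (k - l) * a l) *
            (1 / ((l.factorial : ℝ) * (k - l).factorial)) := by ring
        _ = x ^ k * ((-1) ^ (k - l) * a l) * ((k.choose l : ℝ) / (k.factorial : ℝ)) := by
            rw [hxx, ← hkey2]
        _ = x ^ k / k.factorial * ((k.choose l : ℝ) * (-1) ^ (k - l) * a l) := by ring
    rw [Finset.sum_congr rfl hterm, ← Finset.mul_sum, halt k]
  have hzero : ∀ k ∉ Finset.range (n + 1), x ^ k / (k.factorial : ℝ) * d k = 0 := by
    intro k hk
    rw [hd0 k (by simpa using hk), mul_zero]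
  have htsum : ∑' k : ℕ, (∑ l ∈ Finset.range (k + 1),
      (x ^ l / l.factorial * a l) * ((-x) ^ (k - l) / ((k - l).factorial : ℝ)))
      = ∑ k ∈ Finset.range (n + 1), x ^ k / k.factorial * d k := by
    rw [tsum_congr hinner, tsum_eq_sum hzero]
  have hLah : ∀ k, probLah μ Ys n k = (k.factorial : ℝ)⁻¹ * d k := by
    intro k
    rw [probLah, ← halt k]
  calc probLahBell μ Ys n x = ∑ k ∈ Finset.range (n + 1), x ^ k / k.factorial * d k := by
        rw [probLahBell]
        exact Finset.sum_congr rfl fun k _ => by rw [hLah k]; ring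
    _ = ∑' k : ℕ, (∑ l ∈ Finset.range (k + 1),
          (x ^ l / l.factorial * a l) * ((-x) ^ (k - l) / ((k - l).factorial : ℝ))) := htsum.symm
    _ = (∑' k : ℕ, x ^ k / k.factorial * a k) * ∑' m : ℕ, (-x) ^ m / (m.factorial : ℝ) := hC.symm
    _ = Real.exp (-x) * ∑' k : ℕ, x ^ k / k.factorial * a k := by rw [hexp]; ring
end

section
/- For every integer $n \ge 0$ and every real number $x$, $B_n^{(L,Y)}(x) = \sum_{k=0}^{n} B_{n,k}\big(xE[\langle Y\rangle_1], xE[\langle Y\rangle_2], \dots, xE[\langle Y\rangle_{n-k+1}]\big)$. -/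
open MeasureTheory ProbabilityTheory Finset

/-- The partial Bell polynomial `B_{n,k}(x_1, …, x_{n-k+1})`, as a sum over all tuples of
nonnegative integers `(k_1, …, k_{n-k+1})` with `∑ k_i = k` and `∑ i k_i = n`. -/
noncomputable def partialBell (n k : ℕ) (x : ℕ → ℝ) : ℝ :=
  ∑ c ∈ (Fintype.piFinset fun _ : Fin (n - k + 1) => Finset.range (k + 1)) |>.filter
      (fun c => (∑ i, c i) = k ∧ (∑ i, (i.1 + 1) * c i) = n),
    ((n.factorial : ℝ) / ∏ i, ((c i).factorial : ℝ)) *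
      ∏ i, (x (i.1 + 1) / ((i.1 + 1).factorial : ℝ)) ^ (c i)

lemma asc_zero_eq : ∀ n : ℕ, asc 0 n = if n = 0 then 1 else 0
  | 0 => by simp [asc]
  | 1 => by simp [asc]
  | n + 2 => by rw [asc, asc_zero_eq (n+1)]; simp

lemma measurable_asc (n : ℕ) : Measurable (fun x : ℝ => asc x n) := by
  induction n with
  | zero => simp only [asc]; exact measurable_const
  | succ n ih => exact ih.mul (measurable_id.add_const _)

lemma abs_asc_le_s5 (y : ℝ) : ∀ n : ℕ, |asc y n| ≤ (|y| + n) ^ n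
  | 0 => by simp [asc]
  | n + 1 => by
    rw [asc, abs_mul]
    have h1 : |asc y n| ≤ (|y| + n) ^ n := abs_asc_le_s5 y n
    have h2 : |y + (n:ℝ)| ≤ |y| + n := by
      calc |y + (n:ℝ)| ≤ |y| + |(n:ℝ)| := abs_add_le _ _
        _ = |y| + n := by rw [Nat.abs_cast]
    have hb : (0:ℝ) ≤ |y| + n := by positivity
    calc |asc y n| * |y + (n:ℝ)| ≤ (|y| + n) ^ n * (|y| + n) :=
          mul_le_mul h1 h2 (abs_nonneg _) (by positivity)
      _ = (|y| + n) ^ (n+1) := (pow_succ _ _).symm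
      _ ≤ (|y| + (n+1:ℕ)) ^ (n+1) := by
          apply pow_le_pow_left₀ hb; push_cast; linarith

lemma pow_le_exp' {x : ℝ} (hx : 0 ≤ x) (n : ℕ) : x ^ n ≤ (n:ℝ) ^ n * Real.exp x := by
  rcases Nat.eq_zero_or_pos n with h | h
  · subst h; simpa using Real.one_le_exp hx
  · have hn : (0:ℝ) < n := by exact_mod_cast h
    have h1 : x ≤ n * Real.exp (x / n) := by
      have := Real.add_one_le_exp (x / n)
      have h2 : x / n ≤ Real.exp (x / n) := by linarith [div_nonneg hx hn.le]
      calc x = n * (x / n) := by field_simp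
        _ ≤ n * Real.exp (x / n) := by nlinarith
    calc x ^ n ≤ (n * Real.exp (x / n)) ^ n := pow_le_pow_left₀ hx h1 n
      _ = (n:ℝ)^n * Real.exp (x/n) ^ n := mul_pow _ _ _
      _ = (n:ℝ)^n * Real.exp x := by
          rw [← Real.exp_nat_mul]; field_simp

lemma integrable_asc {Ω : Type*} [MeasurableSpace Ω] (μ : Measure Ω) [IsProbabilityMeasure μ]
    (Y : Ω → ℝ) (hY : Measurable Y) (r : ℝ) (hr : 0 < r)
    (hmgf : ∀ t : ℝ, |t| < r → Integrable (fun ω => Real.exp (t * Y ω)) μ)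
    (n : ℕ) : Integrable (fun ω => asc (Y ω) n) μ := by
  set s := r / 2 with hs
  have hs0 : 0 < s := by positivity
  have h1 : Integrable (fun ω => Real.exp (s * Y ω)) μ :=
    hmgf s (by rw [abs_of_pos hs0]; linarith)
  have h2 : Integrable (fun ω => Real.exp (-s * Y ω)) μ :=
    hmgf (-s) (by rw [abs_of_neg (by linarith)]; linarith)
  set C := (2 / r) ^ n * (n:ℝ) ^ n * Real.exp (s * n) with hC
  have hC0 : 0 ≤ C := by positivity
  apply Integrable.mono (((h1.add h2).const_mul C))
    ((measurable_asc n).comp hY).aestronglyMeasurable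
  filter_upwards with ω
  set y := Y ω with hy
  have key : |asc y n| ≤ C * (Real.exp (s * y) + Real.exp (-s * y)) := by
    have e1 : |asc y n| ≤ (|y| + n) ^ n := abs_asc_le_s5 y n
    have e2 : (|y| + n) ^ n = (2 / r) ^ n * (s * (|y| + n)) ^ n := by
      rw [← mul_pow]
      congr 1
      field_simp [hs]
      ring
    have e3 : (s * (|y| + n)) ^ n ≤ (n:ℝ) ^ n * Real.exp (s * (|y| + n)) :=
      pow_le_exp' (by positivity) n
    have e4 : Real.exp (s * (|y| + n)) = Real.exp (s * |y|) * Real.exp (s * n) := by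
      rw [← Real.exp_add]; ring_nf
    have e5 : Real.exp (s * |y|) ≤ Real.exp (s * y) + Real.exp (-s * y) := by
      rcases abs_cases y with ⟨h, _⟩ | ⟨h, _⟩
      · rw [h]; nlinarith [Real.exp_pos (-s * y)]
      · rw [h]
        have : s * -y = -s * y := by ring
        rw [this]
        nlinarith [Real.exp_pos (s * y)]
    calc |asc y n| ≤ (|y| + n) ^ n := e1
      _ = (2 / r) ^ n * (s * (|y| + n)) ^ n := e2
      _ ≤ (2 / r) ^ n * ((n:ℝ) ^ n * Real.exp (s * (|y| + n))) := by
          apply mul_le_mul_of_nonneg_left e3 (by positivity)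
      _ = C * Real.exp (s * |y|) := by rw [e4, hC]; ring
      _ ≤ C * (Real.exp (s * y) + Real.exp (-s * y)) :=
          mul_le_mul_of_nonneg_left e5 hC0
  calc ‖asc y n‖ = |asc y n| := rfl
    _ ≤ C * (Real.exp (s * y) + Real.exp (-s * y)) := key
    _ ≤ ‖C * (Real.exp (s * y) + Real.exp (-s * y))‖ := le_abs_self _

lemma asc_add_eq (a b : ℝ) : ∀ n : ℕ, asc (a + b) n =
    ∑ i ∈ range (n + 1), (n.choose i : ℝ) * (asc a i * asc b (n - i))
  | 0 => by simp [asc]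
  | n + 1 => by
    have IH := asc_add_eq a b n
    rw [asc, IH, sum_mul]
    have hterm : ∀ i ∈ range (n+1),
        (n.choose i : ℝ) * (asc a i * asc b (n - i)) * (a + b + n)
        = (n.choose i : ℝ) * (asc a (i+1) * asc b (n - i))
          + (n.choose i : ℝ) * (asc a i * asc b (n + 1 - i)) := by
      intro i hi
      rw [mem_range] at hi
      have hle : i ≤ n := Nat.lt_succ_iff.mp hi
      have hcast : ((n - i : ℕ) : ℝ) = n - i := by
        rw [Nat.cast_sub hle]
      have h1 : n + 1 - i = (n - i) + 1 := by omega
      rw [h1, asc, asc, hcast]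
      ring
    rw [sum_congr rfl hterm, sum_add_distrib]
    -- now target
    rw [sum_range_succ' (fun i => ((n+1).choose i : ℝ) * (asc a i * asc b (n + 1 - i))) (n+1)]
    have h2 : ∀ i ∈ range (n+1), (((n+1).choose (i+1) : ℝ)) * (asc a (i+1) * asc b (n + 1 - (i+1)))
        = (n.choose i : ℝ) * (asc a (i+1) * asc b (n - i))
          + (n.choose (i+1) : ℝ) * (asc a (i+1) * asc b (n - i)) := by
      intro i hi
      have : (n+1).choose (i+1) = n.choose i + n.choose (i+1) := Nat.choose_succ_succ' n i
      have h3 : n + 1 - (i+1) = n - i := by omega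
      rw [h3, this]; push_cast; ring
    rw [sum_congr rfl h2, sum_add_distrib, add_assoc]
    congr 1
    rw [sum_range_succ' (fun i => (n.choose i : ℝ) * (asc a i * asc b (n + 1 - i))) n]
    congr 1
    · rw [sum_range_succ]
      simp only [Nat.choose_succ_self, Nat.cast_zero, zero_mul, add_zero]
      apply sum_congr rfl
      intro i hi
      have h3 : n + 1 - (i+1) = n - i := by omega
      rw [h3]
    · simp [asc]

/-- extension of a tuple on `Fin (n-k+1)` to a function on `ℕ` supported on `[1, n-k+1]`. -/
def extFun (n k : ℕ) (d : Fin (n - k + 1) → ℕ) (j : ℕ) : ℕ :=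
  if h : 1 ≤ j ∧ j ≤ n - k + 1 then d ⟨j - 1, by omega⟩ else 0

@[to_additive sum_Icc_one_eq_sum_fin]
lemma prod_Icc_one_eq_prod_fin {M : Type*} [CommMonoid M] (m : ℕ) (F : ℕ → M) :
    ∏ j ∈ Icc 1 m, F j = ∏ i : Fin m, F (i.1 + 1) := by
  rw [← Finset.Ico_add_one_right_eq_Icc, Finset.prod_Ico_eq_prod_range]
  rw [Fin.prod_univ_eq_prod_range (fun i => F (i + 1)) m]
  apply prod_congr (by norm_num) fun i _ => by rw [Nat.add_comm 1 i]

@[to_additive sum_Icc_extFun]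
lemma prod_Icc_extFun {M : Type*} [CommMonoid M] {n k : ℕ} (hkn : k ≤ n)
    (d : Fin (n - k + 1) → ℕ) (hd : ∑ i, d i = k)
    (ψ : ℕ → ℕ → M) (hψ : ∀ j, ψ j 0 = 1) :
    ∏ j ∈ Icc 1 n, ψ j (extFun n k d j) = ∏ i : Fin (n - k + 1), ψ (i.1 + 1) (d i) := by
  rcases Nat.eq_zero_or_pos k with hk | hk
  · subst hk
    have hd0 : ∀ i, d i = 0 := by
      intro i
      exact (Finset.sum_eq_zero_iff.mp hd) i (mem_univ i)
    have : ∀ j, extFun n 0 d j = 0 := by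
      intro j; unfold extFun; split
      · rename_i h; rw [hd0]
      · rfl
    simp only [this, hd0, hψ, prod_const_one]
  · have hm : n - k + 1 ≤ n := by omega
    have hrw : ∀ i : Fin (n - k + 1), ψ (i.1 + 1) (d i) = ψ (i.1 + 1) (extFun n k d (i.1 + 1)) := by
      intro i
      have : extFun n k d (i.1 + 1) = d i := by
        unfold extFun
        rw [dif_pos ⟨by omega, by omega⟩]
        exact congrArg d (Fin.ext (by simp))
      rw [this]
    rw [prod_congr rfl (fun i _ => hrw i)]
    rw [← prod_Icc_one_eq_prod_fin (n - k + 1) (fun j => ψ j (extFun n k d j))]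
    refine (Finset.prod_subset (Icc_subset_Icc_right hm) ?_).symm
    intro j hj hj'
    rw [mem_Icc] at hj
    rw [mem_Icc] at hj'
    have : extFun n k d j = 0 := by
      unfold extFun; rw [dif_neg]; omega
    rw [this, hψ]

lemma support_small {n k : ℕ} {c : ℕ → ℕ}
    (hsum : ∑ j ∈ Icc 1 n, c j = k)
    (hsupp : ∀ j, c j ≠ 0 → j ∈ Icc 1 n)
    (hw : ∑ j ∈ Icc 1 n, j * c j = n) :
    ∀ j, ¬(1 ≤ j ∧ j ≤ n - k + 1) → c j = 0 := by
  have hkn : k ≤ n := by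
    calc k = ∑ j ∈ Icc 1 n, c j := hsum.symm
      _ ≤ ∑ j ∈ Icc 1 n, j * c j := by
          apply sum_le_sum
          intro j hj
          rw [mem_Icc] at hj
          exact Nat.le_mul_of_pos_left _ hj.1
      _ = n := hw
  intro j hjc
  by_contra hne
  have hj := hsupp j hne
  rw [mem_Icc] at hj
  have hkey : ∑ i ∈ Icc 1 n, i * c i = (∑ i ∈ Icc 1 n, (i - 1) * c i) + k := by
    rw [← hsum, ← sum_add_distrib]
    apply sum_congr rfl
    intro i hi
    rw [mem_Icc] at hi
    obtain ⟨i', rfl⟩ : ∃ i', i = i' + 1 := ⟨i - 1, by omega⟩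
    simp [Nat.succ_mul]
  have hsingle : (j - 1) * c j ≤ ∑ i ∈ Icc 1 n, (i - 1) * c i := by
    apply single_le_sum (fun i _ => Nat.zero_le _) (hsupp j hne)
  have hcj : 1 ≤ c j := Nat.one_le_iff_ne_zero.mpr hne
  have : n - k + 1 ≤ (j - 1) * c j := by
    calc n - k + 1 ≤ (j - 1) * 1 := by omega
      _ ≤ (j - 1) * c j := Nat.mul_le_mul_left _ hcj
  omega

lemma partialBell_eq (n k : ℕ) (x : ℕ → ℝ) :
    partialBell n k x = ∑ c ∈ ((Icc 1 n).piAntidiag k).filter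
        (fun c => ∑ j ∈ Icc 1 n, j * c j = n),
      ((n.factorial : ℝ) / ∏ j ∈ Icc 1 n, ((c j).factorial : ℝ)) *
        ∏ j ∈ Icc 1 n, (x j / (j.factorial : ℝ)) ^ (c j) := by
  unfold partialBell
  refine sum_nbij' (extFun n k) (fun c i => c (i.1 + 1)) ?_ ?_ ?_ ?_ ?_
  · -- hi
    intro d hd
    rw [mem_filter, Fintype.mem_piFinset] at hd
    obtain ⟨hmem, hd1, hd2⟩ := hd
    have hkn : k ≤ n := by
      calc k = ∑ i : Fin (n - k + 1), d i := hd1.symm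
        _ ≤ ∑ i : Fin (n - k + 1), (i.1 + 1) * d i :=
            sum_le_sum fun i _ => Nat.le_mul_of_pos_left _ (Nat.succ_pos _)
        _ = n := hd2
    rw [mem_filter, mem_piAntidiag]
    refine ⟨⟨?_, ?_⟩, ?_⟩
    · have := sum_Icc_extFun hkn d hd1 (fun _ t => t) (fun _ => rfl)
      simpa [hd1] using this
    · intro j hj
      rcases Nat.eq_zero_or_pos k with hk | hk
      · exfalso
        apply hj
        have hd0 : ∀ i, d i = 0 := fun i =>
          (Finset.sum_eq_zero_iff.mp (hd1.trans hk)) i (mem_univ i)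
        unfold extFun
        split
        · rw [hd0]
        · rfl
      · have hcond : 1 ≤ j ∧ j ≤ n - k + 1 := by
          by_contra hc
          exact hj (by unfold extFun; rw [dif_neg hc])
        rw [mem_Icc]
        omega
    · have := sum_Icc_extFun hkn d hd1 (fun j t => j * t) (fun _ => by ring)
      simpa [hd2] using this
  · -- hj
    intro c hc
    rw [mem_filter, mem_piAntidiag] at hc
    obtain ⟨⟨hc1, hsupp⟩, hw⟩ := hc
    have hss := support_small hc1 hsupp hw
    have hkn : k ≤ n := by
      calc k = ∑ j ∈ Icc 1 n, c j := hc1.symm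
        _ ≤ ∑ j ∈ Icc 1 n, j * c j := by
            apply sum_le_sum
            intro j hj
            rw [mem_Icc] at hj
            exact Nat.le_mul_of_pos_left _ hj.1
        _ = n := hw
    rw [mem_filter, Fintype.mem_piFinset]
    have hle : ∀ i : Fin (n - k + 1), c (i.1 + 1) ≤ k := by
      intro i
      rcases Nat.eq_zero_or_pos (c (i.1 + 1)) with h | h
      · omega
      · calc c (i.1 + 1) ≤ ∑ j ∈ Icc 1 n, c j :=
              single_le_sum (fun j _ => Nat.zero_le _) (hsupp _ (by omega))
          _ = k := hc1
    rcases Nat.eq_zero_or_pos k with hk | hk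
    · subst hk
      have hc0 : ∀ j, c j = 0 := by
        intro j
        rcases Nat.eq_zero_or_pos (c j) with h | h
        · exact h
        · exact (Finset.sum_eq_zero_iff.mp hc1) j (hsupp j (by omega))
      have hn0 : n = 0 := by
        rw [← hw]
        exact sum_eq_zero fun j _ => by rw [hc0 j, Nat.mul_zero]
      exact ⟨fun i => by simp [hc0], by simp [hc0], by simp [hc0, hn0]⟩
    · have hm : n - k + 1 ≤ n := by omega
      have hgen : ∀ (φ : ℕ → ℕ → ℕ), (∀ j, φ j 0 = 0) →
          ∑ i : Fin (n - k + 1), φ (i.1 + 1) (c (i.1 + 1)) = ∑ j ∈ Icc 1 n, φ j (c j) := by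
        intro φ hφ
        rw [← sum_Icc_one_eq_sum_fin (n - k + 1) (fun j => φ j (c j))]
        apply Finset.sum_subset (Icc_subset_Icc_right hm)
        intro j hj hj'
        rw [mem_Icc] at hj
        rw [mem_Icc] at hj'
        rw [hss j (by omega), hφ]
      refine ⟨fun i => ?_, ?_, ?_⟩
      · rw [mem_range]; exact Nat.lt_succ_of_le (hle i)
      · have := hgen (fun _ t => t) (fun _ => rfl)
        simpa [hc1] using this
      · have := hgen (fun j t => j * t) (fun _ => by ring)
        simpa [hw] using this
  · -- left inverse
    intro d _
    funext i
    show extFun n k d (i.1 + 1) = d i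
    unfold extFun
    rw [dif_pos ⟨by omega, by omega⟩]
    exact congrArg d (Fin.ext (by simp))
  · -- right inverse
    intro c hc
    rw [mem_filter, mem_piAntidiag] at hc
    obtain ⟨⟨hc1, hsupp⟩, hw⟩ := hc
    have hss := support_small hc1 hsupp hw
    funext j
    unfold extFun
    split
    · rename_i h
      show c (j - 1 + 1) = c j
      congr 1
      omega
    · rename_i h
      exact (hss j h).symm
  · -- values
    intro d hd
    rw [mem_filter, Fintype.mem_piFinset] at hd
    obtain ⟨hmem, hd1, hd2⟩ := hd
    have hkn : k ≤ n := by
      calc k = ∑ i : Fin (n - k + 1), d i := hd1.symm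
        _ ≤ ∑ i : Fin (n - k + 1), (i.1 + 1) * d i :=
            sum_le_sum fun i _ => Nat.le_mul_of_pos_left _ (Nat.succ_pos _)
        _ = n := hd2
    have e1 := prod_Icc_extFun hkn d hd1 (fun j t => ((t.factorial : ℕ) : ℝ))
        (fun _ => by norm_num)
    have e2 := prod_Icc_extFun hkn d hd1 (fun j t => (x j / (j.factorial : ℝ)) ^ t)
        (fun _ => by norm_num)
    rw [e1, e2]

section PS
open PowerSeries

lemma coeff_pow_congr {a b : PowerSeries ℝ} {n : ℕ}
    (h : ∀ i ≤ n, PowerSeries.coeff i a = PowerSeries.coeff i b) (k : ℕ) :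
    ∀ i ≤ n, PowerSeries.coeff i (a ^ k) = PowerSeries.coeff i (b ^ k) := by
  induction k with
  | zero => intro i _; rfl
  | succ k ih =>
    intro i hi
    rw [pow_succ, pow_succ, PowerSeries.coeff_mul, PowerSeries.coeff_mul]
    apply sum_congr rfl
    intro p hp
    rw [Finset.HasAntidiagonal.mem_antidiagonal] at hp
    rw [ih p.1 (by omega), h p.2 (by omega)]

lemma ps_monomial_eq (i : ℕ) (b : ℝ) :
    PowerSeries.monomial i b = PowerSeries.C b * X ^ i := by
  ext m
  rw [PowerSeries.coeff_monomial, PowerSeries.coeff_C_mul_X_pow]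

lemma ps_monomial_mul (i j : ℕ) (b c : ℝ) :
    PowerSeries.monomial i b * PowerSeries.monomial j c
      = PowerSeries.monomial (i + j) (b * c) := by
  rw [ps_monomial_eq, ps_monomial_eq, ps_monomial_eq, map_mul]
  ring

lemma ps_monomial_pow (j e : ℕ) (a : ℝ) :
    (PowerSeries.monomial j a) ^ e = PowerSeries.monomial (e * j) (a ^ e) := by
  induction e with
  | zero => simp
  | succ e ih =>
    rw [pow_succ, ih, ps_monomial_mul, pow_succ]
    congr 1
    ring

lemma ps_prod_monomial_pow {s : Finset ℕ} (c : ℕ → ℕ) (a : ℕ → ℝ) :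
    ∏ j ∈ s, (PowerSeries.monomial j (a j)) ^ (c j)
      = PowerSeries.monomial (∑ j ∈ s, j * c j) (∏ j ∈ s, a j ^ c j) := by
  induction s using Finset.induction_on with
  | empty => simp
  | insert _ _ hx ih =>
    rename_i x s'
    rw [prod_insert hx, prod_insert hx, sum_insert hx, ih,
      ps_monomial_pow, ps_monomial_mul, Nat.mul_comm (c x) x]

lemma coeff_g_pow (m : ℕ → ℝ) (n k : ℕ) :
    PowerSeries.coeff n
        ((PowerSeries.mk fun j => if j = 0 then 0 else m j / (j.factorial : ℝ)) ^ k)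
      = ∑ c ∈ ((Icc 1 n).piAntidiag k).filter (fun c => ∑ j ∈ Icc 1 n, j * c j = n),
        (Nat.multinomial (Icc 1 n) c : ℝ) *
          ∏ j ∈ Icc 1 n, (m j / (j.factorial : ℝ)) ^ (c j) := by
  set a : ℕ → ℝ := fun j => m j / (j.factorial : ℝ) with ha
  set T : PowerSeries ℝ := ∑ j ∈ Icc 1 n, PowerSeries.monomial j (a j) with hT
  have hcoeff : ∀ i ≤ n,
      PowerSeries.coeff i (PowerSeries.mk fun j => if j = 0 then 0 else a j)
        = PowerSeries.coeff i T := by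
    intro i hi
    rw [PowerSeries.coeff_mk, hT, map_sum]
    have : ∀ j ∈ Icc 1 n, PowerSeries.coeff i (PowerSeries.monomial j (a j))
        = if i = j then a j else 0 := fun j _ => PowerSeries.coeff_monomial _ _ _
    rw [sum_congr rfl this, Finset.sum_ite_eq]
    by_cases h0 : i = 0
    · simp [h0]
    · have : i ∈ Icc 1 n := by rw [mem_Icc]; omega
      rw [if_pos this, if_neg h0]
  rw [coeff_pow_congr hcoeff k n le_rfl]
  rw [hT, Finset.sum_pow_eq_sum_piAntidiag, map_sum]
  rw [Finset.sum_filter]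
  apply sum_congr rfl
  intro c _
  rw [ps_prod_monomial_pow]
  have hcast : ((Nat.multinomial (Icc 1 n) c : ℕ) : PowerSeries ℝ)
      = PowerSeries.C ((Nat.multinomial (Icc 1 n) c : ℕ) : ℝ) := (map_natCast _ _).symm
  rw [hcast, PowerSeries.coeff_C_mul, PowerSeries.coeff_monomial]
  by_cases h : ∑ j ∈ Icc 1 n, j * c j = n
  · rw [if_pos h, if_pos h.symm]
  · rw [if_neg h, if_neg (fun hh => h hh.symm), mul_zero]

end PS

lemma key_integral {Ω : Type*} [MeasurableSpace Ω] (μ : Measure Ω) [IsProbabilityMeasure μ]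
    (Y : Ω → ℝ) (Ys : ℕ → Ω → ℝ)
    (hY : Measurable Y) (hYs : ∀ j, Measurable (Ys j))
    (hid : ∀ j, IdentDistrib (Ys j) Y μ μ)
    (hindep : iIndepFun Ys μ)
    (r : ℝ) (hr : 0 < r)
    (hmgf : ∀ t : ℝ, |t| < r → Integrable (fun ω => Real.exp (t * Y ω)) μ)
    (l : ℕ) : ∀ n : ℕ,
      Integrable (fun ω => asc (∑ j ∈ Finset.range l, Ys j ω) n) μ ∧
      ∫ ω, asc (∑ j ∈ Finset.range l, Ys j ω) n ∂μ
        = (n.factorial : ℝ) * PowerSeries.coeff n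
            ((PowerSeries.mk fun j => (∫ ω, asc (Y ω) j ∂μ) / (j.factorial : ℝ)) ^ l) := by
  set F : PowerSeries ℝ :=
    PowerSeries.mk fun j => (∫ ω, asc (Y ω) j ∂μ) / (j.factorial : ℝ) with hF
  induction l with
  | zero =>
    intro n
    have hfun : (fun ω => asc (∑ j ∈ Finset.range 0, Ys j ω) n) = fun _ => asc 0 n := by
      funext ω; rw [range_zero, sum_empty]
    constructor
    · rw [hfun]; exact integrable_const _
    · rw [hfun, integral_const, probReal_univ, smul_eq_mul, one_mul,
        pow_zero, PowerSeries.coeff_one, asc_zero_eq]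
      rcases Nat.eq_zero_or_pos n with h | h
      · subst h; simp
      · rw [if_neg (by omega), mul_zero]
  | succ l ih =>
    intro n
    set Sl : Ω → ℝ := fun ω => ∑ j ∈ Finset.range l, Ys j ω with hSl
    have hfun : (fun ω => asc (∑ j ∈ Finset.range (l+1), Ys j ω) n)
        = fun ω => ∑ i ∈ range (n + 1),
            (n.choose i : ℝ) * (asc (Sl ω) i * asc (Ys l ω) (n - i)) := by
      funext ω
      rw [sum_range_succ]
      exact asc_add_eq _ _ n
    have hind : IndepFun Sl (Ys l) μ := by
      have h := hindep.indepFun_finsetSum_of_notMem hYs (s := Finset.range l) (i := l)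
        (by simp)
      have : (∑ j ∈ Finset.range l, Ys j) = Sl := by
        funext ω; rw [Finset.sum_apply]
      rwa [this] at h
    have hYsint : ∀ m : ℕ, Integrable (fun ω => asc (Ys l ω) m) μ ∧
        ∫ ω, asc (Ys l ω) m ∂μ = ∫ ω, asc (Y ω) m ∂μ := by
      intro m
      have idd : IdentDistrib (fun ω => asc (Ys l ω) m) (fun ω => asc (Y ω) m) μ μ :=
        (hid l).comp (measurable_asc m)
      exact ⟨idd.integrable_iff.mpr (integrable_asc μ Y hY r hr hmgf m), idd.integral_eq⟩
    have hterm : ∀ i : ℕ, Integrable (fun ω => asc (Sl ω) i * asc (Ys l ω) (n - i)) μ ∧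
        ∫ ω, asc (Sl ω) i * asc (Ys l ω) (n - i) ∂μ
          = (∫ ω, asc (Sl ω) i ∂μ) * ∫ ω, asc (Ys l ω) (n - i) ∂μ := by
      intro i
      have hii : IndepFun (fun ω => asc (Sl ω) i) (fun ω => asc (Ys l ω) (n - i)) μ :=
        hind.comp (measurable_asc i) (measurable_asc (n - i))
      have h1 := (ih i).1
      have h2 := (hYsint (n - i)).1
      exact ⟨hii.integrable_mul h1 h2, hii.integral_mul_eq_mul_integral h1.aestronglyMeasurable h2.aestronglyMeasurable⟩
    constructor
    · rw [hfun]
      exact integrable_finset_sum _ fun i _ => ((hterm i).1.const_mul _)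
    · rw [hfun, integral_finset_sum _ fun i _ => ((hterm i).1.const_mul _)]
      have hlhs : ∀ i ∈ range (n+1),
          ∫ ω, (n.choose i : ℝ) * (asc (Sl ω) i * asc (Ys l ω) (n - i)) ∂μ
            = (n.choose i : ℝ) * (((i.factorial : ℝ) * PowerSeries.coeff i (F ^ l))
                * ∫ ω, asc (Y ω) (n - i) ∂μ) := by
        intro i _
        rw [integral_const_mul, (hterm i).2, (ih i).2, (hYsint (n - i)).2]
      rw [sum_congr rfl hlhs]
      rw [pow_succ, PowerSeries.coeff_mul,
        Finset.Nat.sum_antidiagonal_eq_sum_range_succ_mk, mul_sum]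
      apply sum_congr rfl
      intro i hi
      rw [mem_range] at hi
      have hle : i ≤ n := by omega
      have hcc : (n.choose i : ℝ) * (i.factorial : ℝ) * ((n - i).factorial : ℝ)
          = (n.factorial : ℝ) := by
        exact_mod_cast Nat.choose_mul_factorial_mul_factorial hle
      have hcmk : PowerSeries.coeff (n - i) F
          = (∫ ω, asc (Y ω) (n - i) ∂μ) / (((n - i).factorial : ℕ) : ℝ) := by
        rw [hF]; exact PowerSeries.coeff_mk _ _
      rw [hcmk]
      have hne : ((n - i).factorial : ℝ) ≠ 0 := Nat.cast_ne_zero.mpr (Nat.factorial_ne_zero _)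
      set c' := PowerSeries.coeff i (F ^ l) with hc'
      set I := ∫ ω, asc (Y ω) (n - i) ∂μ with hI
      field_simp
      linear_combination c' * I * hcc

lemma partialBell_smul (n k : ℕ) (x : ℝ) (m : ℕ → ℝ) :
    partialBell n k (fun j => x * m j) = x ^ k * partialBell n k m := by
  unfold partialBell
  rw [mul_sum]
  apply sum_congr rfl
  intro c hc
  rw [mem_filter] at hc
  obtain ⟨-, hk, -⟩ := hc
  have hprod : ∏ i, ((x * m (i.1 + 1)) / ((i.1 + 1).factorial : ℝ)) ^ (c i)
      = x ^ k * ∏ i, (m (i.1 + 1) / ((i.1 + 1).factorial : ℝ)) ^ (c i) := by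
    have hx : x ^ k = ∏ i : Fin (n - k + 1), x ^ (c i) := by
      rw [prod_pow_eq_pow_sum, hk]
    rw [hx, ← prod_mul_distrib]
    apply prod_congr rfl
    intro i _
    rw [mul_div_assoc, mul_pow]
  rw [hprod]
  ring

lemma factorial_mul_partialBell (n k : ℕ) (m : ℕ → ℝ) :
    (k.factorial : ℝ) * partialBell n k m
      = (n.factorial : ℝ) * PowerSeries.coeff n
          ((PowerSeries.mk fun j => if j = 0 then 0 else m j / (j.factorial : ℝ)) ^ k) := by
  rw [partialBell_eq n k m, coeff_g_pow m n k, mul_sum, mul_sum]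
  apply sum_congr rfl
  intro c hc
  rw [mem_filter, mem_piAntidiag] at hc
  obtain ⟨⟨hsum, -⟩, -⟩ := hc
  have hms : (∏ j ∈ Icc 1 n, ((c j).factorial : ℝ)) * (Nat.multinomial (Icc 1 n) c : ℝ)
      = (k.factorial : ℝ) := by
    rw [← hsum]
    exact_mod_cast congrArg (Nat.cast (R := ℝ)) (Nat.multinomial_spec (Icc 1 n) c)
  have hne : (∏ j ∈ Icc 1 n, ((c j).factorial : ℝ)) ≠ 0 :=
    prod_ne_zero_iff.mpr fun j _ => Nat.cast_ne_zero.mpr (Nat.factorial_ne_zero _)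
  set P := ∏ j ∈ Icc 1 n, (m j / (j.factorial : ℝ)) ^ (c j)
  field_simp
  linear_combination (-P) * hms

theorem statement_5 {Ω : Type*} [MeasurableSpace Ω] (μ : Measure Ω) [IsProbabilityMeasure μ]
    (Y : Ω → ℝ) (Ys : ℕ → Ω → ℝ)
    (hY : Measurable Y) (hYs : ∀ j, Measurable (Ys j))
    (hid : ∀ j, IdentDistrib (Ys j) Y μ μ)
    (hindep : iIndepFun Ys μ)
    (r : ℝ) (hr : 0 < r)
    (hmgf : ∀ t : ℝ, |t| < r → Integrable (fun ω => Real.exp (t * Y ω)) μ)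
    (n : ℕ) (x : ℝ) :
    probLahBell μ Ys n x =
      ∑ k ∈ Finset.range (n + 1), partialBell n k (fun j => x * ∫ ω, asc (Y ω) j ∂μ) := by
  set mom : ℕ → ℝ := fun j => ∫ ω, asc (Y ω) j ∂μ with hmom
  set F : PowerSeries ℝ := PowerSeries.mk fun j => mom j / (j.factorial : ℝ) with hF
  set g : PowerSeries ℝ :=
    PowerSeries.mk fun j => if j = 0 then 0 else mom j / (j.factorial : ℝ) with hg
  have hmom0 : mom 0 = 1 := by
    have : (fun ω => asc (Y ω) 0) = fun _ => (1:ℝ) := by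
      funext ω; rfl
    rw [hmom]
    show (∫ ω, asc (Y ω) 0 ∂μ) = 1
    rw [this, integral_const, probReal_univ, smul_eq_mul, mul_one]
  have hFg : F - 1 = g := by
    apply PowerSeries.ext
    intro i
    rw [map_sub, PowerSeries.coeff_one, hF, hg, PowerSeries.coeff_mk, PowerSeries.coeff_mk]
    by_cases h0 : i = 0
    · subst h0; rw [if_pos rfl, if_pos rfl, hmom0]; norm_num
    · rw [if_neg h0, if_neg h0, sub_zero]
  have hLah : ∀ k : ℕ, probLah μ Ys n k
      = (n.factorial : ℝ) * (k.factorial : ℝ)⁻¹ * PowerSeries.coeff n (g ^ k) := by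
    intro k
    unfold probLah
    have hint : ∀ l ∈ Finset.range (k+1),
        (k.choose l : ℝ) * (-1:ℝ) ^ (k - l) * ∫ ω, asc (∑ j ∈ Finset.range l, Ys j ω) n ∂μ
          = (k.choose l : ℝ) * (-1:ℝ) ^ (k - l)
              * ((n.factorial : ℝ) * PowerSeries.coeff n (F ^ l)) := by
      intro l _
      rw [(key_integral μ Y Ys hY hYs hid hindep r hr hmgf l n).2]
    rw [sum_congr rfl hint]
    have hco : PowerSeries.coeff n ((F - 1) ^ k)
        = ∑ l ∈ Finset.range (k + 1),
            (-1:ℝ) ^ (l + k) * PowerSeries.coeff n (F ^ l) * (k.choose l : ℝ) := by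
      rw [sub_pow F 1 k, map_sum]
      apply sum_congr rfl
      intro l _
      have hconst : (-1 : PowerSeries ℝ) ^ (l + k) * F ^ l * 1 ^ (k - l) * (k.choose l : ℕ)
          = PowerSeries.C ((-1:ℝ) ^ (l + k) * (k.choose l : ℝ)) * F ^ l := by
        rw [one_pow, mul_one]
        have h1 : (-1 : PowerSeries ℝ) = PowerSeries.C (-1) := by
          rw [map_neg, map_one]
        have h2 : ((k.choose l : ℕ) : PowerSeries ℝ) = PowerSeries.C ((k.choose l : ℕ) : ℝ) :=
          (map_natCast _ _).symm
        rw [h1, h2, ← map_pow, map_mul]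
        ring
      rw [hconst, PowerSeries.coeff_C_mul]
      ring
    rw [hFg] at hco
    have hsigns : ∑ l ∈ Finset.range (k + 1), (k.choose l : ℝ) * (-1:ℝ) ^ (k - l)
          * ((n.factorial : ℝ) * PowerSeries.coeff n (F ^ l))
        = (n.factorial : ℝ) * ∑ l ∈ Finset.range (k + 1),
            (-1:ℝ) ^ (l + k) * PowerSeries.coeff n (F ^ l) * (k.choose l : ℝ) := by
      rw [mul_sum]
      apply sum_congr rfl
      intro l hl
      rw [mem_range] at hl
      have hsign : (-1:ℝ) ^ (k - l) = (-1:ℝ) ^ (l + k) := by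
        have he : l + k = (k - l) + 2 * l := by omega
        rw [he, pow_add, pow_mul]
        norm_num
      rw [hsign]
      ring
    rw [hsigns, ← hco]
    ring
  unfold probLahBell
  apply sum_congr rfl
  intro k _
  rw [hLah k, partialBell_smul n k x mom]
  have hbp := factorial_mul_partialBell n k mom
  rw [← hg] at hbp
  have hkne : (k.factorial : ℝ) ≠ 0 := Nat.cast_ne_zero.mpr (Nat.factorial_ne_zero _)
  have hP : partialBell n k mom
      = (k.factorial : ℝ)⁻¹ * ((n.factorial : ℝ) * PowerSeries.coeff n (g ^ k)) := by
    rw [← hbp, ← mul_assoc, inv_mul_cancel₀ hkne, one_mul]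
  rw [hP]
  ring
end
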